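/- arXiv:1409.0406 — 5 statements merged into one kernel-verified Lean document; each statement's English description precedes it below -/
import Mathlib

section
/- Let A, L, R be N×N complex matrices with L and R diagonal, and suppose LA − AR = |ℓ⟩⟨a| for a column vector |ℓ⟩ and row vector ⟨a|. Let ζ ∈ ℂ be such that ζ − R and 1 + A are invertible, and set H_ζ = (ζ − L)(ζ − R)⁻¹. Then det(1 + A·H_ζ) = det(1 + A)·(1 + ⟨a|(R − ζ)⁻¹(1 + A)⁻¹|ℓ⟩). -/
open Matrix

theorem stmt_0 {N : ℕ} (A : Matrix (Fin N) (Fin N) ℂ) (l r ℓ a : Fin N → ℂ) (ζ : ℂ)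
    (hrank : Matrix.diagonal l * A - A * Matrix.diagonal r = Matrix.vecMulVec ℓ a)
    (hζR : ∀ k, ζ - r k ≠ 0)
    (hA : IsUnit (1 + A).det) :
    (1 + A * Matrix.diagonal (fun k => (ζ - l k) * (ζ - r k)⁻¹)).det
      = (1 + A).det *
        (1 + a ⬝ᵥ (Matrix.diagonal (fun k => (r k - ζ)⁻¹) * (1 + A)⁻¹).mulVec ℓ) := by
  set D : Matrix (Fin N) (Fin N) ℂ := Matrix.diagonal (fun k => ζ - r k) with hD
  set E : Matrix (Fin N) (Fin N) ℂ := Matrix.diagonal (fun k => (ζ - r k)⁻¹) with hE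
  have hED : E * D = 1 := by
    rw [hE, hD, Matrix.diagonal_mul_diagonal]
    simp [inv_mul_cancel₀, hζR]
  have hDE : D * E = 1 := by
    rw [hE, hD, Matrix.diagonal_mul_diagonal]
    simp [mul_inv_cancel₀, hζR]
  -- key rank-one identity
  have h1 : Matrix.diagonal (fun k => ζ - l k) * A = A * D - Matrix.vecMulVec ℓ a := by
    ext i j
    have hij := congrFun (congrFun hrank i) j
    simp only [Matrix.sub_apply, Matrix.diagonal_mul, Matrix.mul_diagonal,
      Matrix.vecMulVec_apply, hD] at hij ⊢
    linear_combination -hij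
  have hH : Matrix.diagonal (fun k => (ζ - l k) * (ζ - r k)⁻¹)
      = Matrix.diagonal (fun k => ζ - l k) * E := by
    rw [hE, Matrix.diagonal_mul_diagonal]
  have hcomm : Matrix.diagonal (fun k => ζ - l k) * E
      = E * Matrix.diagonal (fun k => ζ - l k) := by
    rw [hE, Matrix.diagonal_mul_diagonal, Matrix.diagonal_mul_diagonal]
    exact congrArg _ (funext fun k => mul_comm _ _)
  have step1 : (1 + A * Matrix.diagonal (fun k => (ζ - l k) * (ζ - r k)⁻¹)).det
      = (E * ((1 + A) * D - Matrix.vecMulVec ℓ a)).det := by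
    rw [hH, Matrix.det_one_add_mul_comm]
    congr 1
    rw [hcomm, Matrix.mul_assoc, h1, Matrix.mul_sub, Matrix.mul_sub, Matrix.add_mul,
      Matrix.one_mul, Matrix.mul_add, hED]
    abel
  have hDdet : D.det ≠ 0 := by
    rw [hD, Matrix.det_diagonal]
    exact Finset.prod_ne_zero_iff.2 fun k _ => hζR k
  have hMunit : IsUnit ((1 + A) * D).det := by
    rw [Matrix.det_mul]
    exact hA.mul (isUnit_iff_ne_zero.2 hDdet)
  have hinv : ((1 + A) * D)⁻¹ = E * (1 + A)⁻¹ := by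
    rw [Matrix.mul_inv_rev, Matrix.inv_eq_right_inv hDE]
  have step2 : ((1 + A) * D - Matrix.vecMulVec ℓ a).det
      = ((1 + A) * D).det * (1 - a ⬝ᵥ (E * (1 + A)⁻¹).mulVec ℓ) := by
    have hvv : (1 + A) * D - Matrix.vecMulVec ℓ a
        = (1 + A) * D + Matrix.replicateCol Unit (-ℓ) * Matrix.replicateRow Unit a := by
      rw [← Matrix.vecMulVec_eq Unit, sub_eq_add_neg]
      congr 1
      ext i j
      simp [Matrix.vecMulVec_apply]
    rw [hvv, Matrix.det_add_replicateCol_mul_replicateRow hMunit, hinv]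
    congr 1
    rw [← Matrix.replicateCol_mulVec, Matrix.det_unique]
    simp only [Matrix.add_apply, Matrix.one_apply_eq, Matrix.mulVec_neg, Matrix.replicateCol_apply,
      Pi.neg_apply]
    have hrowv : ((Matrix.replicateRow Unit a * (E * (1 + A)⁻¹)) *ᵥ ℓ) default
        = a ⬝ᵥ (E * (1 + A)⁻¹) *ᵥ ℓ := by
      simp only [Matrix.mulVec, Matrix.mul_apply, Matrix.replicateRow_apply, dotProduct,
        Finset.sum_mul, Finset.mul_sum]
      rw [Finset.sum_comm]
      exact Finset.sum_congr rfl fun k _ => Finset.sum_congr rfl fun j _ =>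
        Finset.sum_congr rfl fun x _ => by ring
    rw [hrowv]
    ring
  have hRHS : Matrix.diagonal (fun k => (r k - ζ)⁻¹) = -E := by
    ext i j
    rcases eq_or_ne i j with h | h
    · subst h
      rw [Matrix.neg_apply, hE, Matrix.diagonal_apply_eq, Matrix.diagonal_apply_eq,
        ← neg_sub ζ (r i), inv_neg]
    · rw [Matrix.neg_apply, hE, Matrix.diagonal_apply_ne _ h, Matrix.diagonal_apply_ne _ h,
        neg_zero]
  have hdetED : E.det * D.det = 1 := by
    rw [← Matrix.det_mul, hED, Matrix.det_one]
  rw [step1, Matrix.det_mul, step2, hRHS, Matrix.det_mul]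
  simp only [Matrix.neg_mul, Matrix.neg_mulVec, dotProduct_neg]
  ring_nf
  linear_combination ((1+A).det * (1 - a ⬝ᵥ (E * (1 + A)⁻¹).mulVec ℓ)) * hdetED
end

section
/- Let A, L, R be N×N complex matrices with L and R diagonal, satisfying LA − AR = |ℓ⟩⟨a|. Let ζ ∈ ℂ be such that ζ − L and 1 + A are invertible. Then det(1 + A·(R − ζ)(L − ζ)⁻¹) = det(1 + A)·(1 − ⟨a|(1 + A)⁻¹(L − ζ)⁻¹|ℓ⟩). -/
open Matrix

theorem stmt_1 {N : ℕ} (A : Matrix (Fin N) (Fin N) ℂ) (l r ℓ a : Fin N → ℂ) (ζ : ℂ)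
    (hrank : Matrix.diagonal l * A - A * Matrix.diagonal r = Matrix.vecMulVec ℓ a)
    (hζL : ∀ k, l k - ζ ≠ 0)
    (hA : IsUnit (1 + A).det) :
    (1 + A * Matrix.diagonal (fun k => (r k - ζ) * (l k - ζ)⁻¹)).det
      = (1 + A).det *
        (1 - a ⬝ᵥ ((1 + A)⁻¹ * Matrix.diagonal (fun k => (l k - ζ)⁻¹)).mulVec ℓ) := by
  set D : Matrix (Fin N) (Fin N) ℂ := Matrix.diagonal (fun k => l k - ζ) with hD
  set E : Matrix (Fin N) (Fin N) ℂ := Matrix.diagonal (fun k => (l k - ζ)⁻¹) with hE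
  set W : Matrix (Fin N) (Fin N) ℂ := Matrix.vecMulVec ℓ a with hW
  have hDE : D * E = 1 := by
    rw [hD, hE, Matrix.diagonal_mul_diagonal]
    convert Matrix.diagonal_one using 2
    ext k
    exact mul_inv_cancel₀ (hζL k)
  have hED : E * D = 1 := by
    rw [hD, hE, Matrix.diagonal_mul_diagonal]
    convert Matrix.diagonal_one using 2
    ext k
    exact inv_mul_cancel₀ (hζL k)
  have hDinv : D⁻¹ = E := Matrix.inv_eq_right_inv hDE
  have hdetD : IsUnit D.det := by
    rw [hD, Matrix.det_diagonal]
    exact isUnit_iff_ne_zero.mpr (Finset.prod_ne_zero_iff.mpr fun k _ => hζL k)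
  -- key rewriting of the argument
  have key : 1 + A * Matrix.diagonal (fun k => (r k - ζ) * (l k - ζ)⁻¹)
      = (D * (1 + A) - W) * E := by
    have h1 : Matrix.diagonal (fun k => (r k - ζ) * (l k - ζ)⁻¹)
        = Matrix.diagonal (fun k => r k - ζ) * E := by
      rw [hE, Matrix.diagonal_mul_diagonal]
    have h2 : A * Matrix.diagonal (fun k => r k - ζ) = D * A - W := by
      have hr : Matrix.diagonal (fun k => r k - ζ)
          = Matrix.diagonal r - ζ • (1 : Matrix (Fin N) (Fin N) ℂ) := by
        rw [Matrix.smul_one_eq_diagonal, ← Matrix.diagonal_sub]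
      have hl : D = Matrix.diagonal l - ζ • (1 : Matrix (Fin N) (Fin N) ℂ) := by
        rw [hD, Matrix.smul_one_eq_diagonal, ← Matrix.diagonal_sub]
      have hAr : A * Matrix.diagonal r = Matrix.diagonal l * A - W := by
        rw [← hrank]; abel
      rw [hr, hl, Matrix.mul_sub, hAr, Matrix.sub_mul]
      rw [Matrix.mul_smul, Matrix.mul_one, Matrix.smul_mul, Matrix.one_mul]
      abel
    rw [h1, ← Matrix.mul_assoc, h2, Matrix.sub_mul, Matrix.sub_mul, Matrix.mul_add,
      Matrix.mul_one, Matrix.add_mul, hDE, Matrix.mul_assoc]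
    abel
  set B : Matrix (Fin N) (Fin N) ℂ := D * (1 + A) with hB
  have hdetB : IsUnit B.det := by
    rw [hB, Matrix.det_mul]; exact hdetD.mul hA
  have hBinv : B⁻¹ = (1 + A)⁻¹ * E := by
    rw [hB, Matrix.mul_inv_rev, hDinv]
  have hfac : B - W = B * (1 - B⁻¹ * W) := by
    rw [Matrix.mul_sub, Matrix.mul_one, ← Matrix.mul_assoc,
      Matrix.mul_nonsing_inv B hdetB, Matrix.one_mul]
  have hdetOneSub : (1 - B⁻¹ * W).det
      = 1 - a ⬝ᵥ ((1 + A)⁻¹ * E).mulVec ℓ := by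
    rw [hW, Matrix.vecMulVec_eq Unit, ← Matrix.mul_assoc, Matrix.det_one_sub_mul_comm,
      ← Matrix.replicateCol_mulVec, Matrix.det_unique]
    simp [hBinv]
  rw [key, Matrix.det_mul, hfac, Matrix.det_mul, hdetOneSub, hB, Matrix.det_mul]
  have hde : D.det * E.det = 1 := by
    rw [← Matrix.det_mul, hDE, Matrix.det_one]
  linear_combination ((1 + A).det * (1 - a ⬝ᵥ ((1 + A)⁻¹ * E).mulVec ℓ)) * hde
end

section
/- Let A, L, R be N×N complex matrices with L, R diagonal, satisfying LA − AR = |ℓ⟩⟨a|. Let Ξ and H be finite multisets of complex numbers, and set H_Ξ = ∏_{ξ∈Ξ}(ξ−L)(ξ−R)⁻¹ and H_H = ∏_{η∈H}(η−L)(η−R)⁻¹ (assuming all inverses exist). Let X = A H_Ξ, Y = A H_H, ⟨y| = ⟨a| H_H, and suppose 1+X, 1+Y, ζ−L, ζ−R are invertible. Then det(1 + X(ζ−L)(ζ−R)⁻¹)·det(1 + Y(ζ−R)(ζ−L)⁻¹) = det(1+X)·det(1+Y)·[1 + ⟨y|(1+Y)⁻¹ D(ζ) (1+X)⁻¹|ℓ⟩],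 where D(ζ) = H_Ξ H_H⁻¹ (R−ζ)⁻¹ − (L−ζ)⁻¹. -/
open Matrix

/-- The diagonal shift matrix `H_Ξ = ∏_{ξ∈Ξ} (ξ−L)(ξ−R)⁻¹` for diagonal `L, R`. -/
noncomputable def Hmat {N : ℕ} (l r : Fin N → ℂ) (Ξ : Multiset ℂ) :
    Matrix (Fin N) (Fin N) ℂ :=
  Matrix.diagonal (fun k => (Ξ.map (fun ξ => (ξ - l k) * (ξ - r k)⁻¹)).prod)

section Aux

variable {N : ℕ}

lemma mul_vecMulVec' (M : Matrix (Fin N) (Fin N) ℂ) (u v : Fin N → ℂ) :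
    M * Matrix.vecMulVec u v = Matrix.vecMulVec (M *ᵥ u) v := by
  ext i j
  simp [Matrix.mul_apply, Matrix.vecMulVec_apply, Matrix.mulVec, dotProduct,
    Finset.sum_mul, mul_assoc]

lemma det_one_add_vecMulVec' (u v : Fin N → ℂ) :
    (1 + Matrix.vecMulVec u v).det = 1 + v ⬝ᵥ u := by
  rw [Matrix.vecMulVec_eq Unit, Matrix.det_one_add_replicateCol_mul_replicateRow]

lemma det_one_sub_vecMulVec' (u v : Fin N → ℂ) :
    (1 - Matrix.vecMulVec u v).det = 1 - v ⬝ᵥ u := by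
  have h : Matrix.vecMulVec (-u) v = -Matrix.vecMulVec u v := by
    ext i j; simp [Matrix.vecMulVec_apply]
  rw [sub_eq_add_neg, ← h, det_one_add_vecMulVec', dotProduct_neg, ← sub_eq_add_neg]

lemma detR' (X : Matrix (Fin N) (Fin N) ℂ) (p q u x : Fin N → ℂ)
    (hq : ∀ k, q k ≠ 0) (hX : IsUnit (1 + X).det)
    (hc : Matrix.diagonal p * X = X * Matrix.diagonal q - Matrix.vecMulVec u x) :
    (1 + X * Matrix.diagonal (fun k => p k * (q k)⁻¹)).det
      = (1 + X).det *
        (1 - x ⬝ᵥ (Matrix.diagonal (fun k => (q k)⁻¹) * (1 + X)⁻¹) *ᵥ u) := by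
  have hqq : Matrix.diagonal (fun k => (q k)⁻¹) * Matrix.diagonal q
      = (1 : Matrix (Fin N) (Fin N) ℂ) := by
    rw [Matrix.diagonal_mul_diagonal,
      show (fun k => (q k)⁻¹ * q k) = fun _ => (1 : ℂ) from
        funext fun k => inv_mul_cancel₀ (hq k), Matrix.diagonal_one]
  have hqq' : Matrix.diagonal q * Matrix.diagonal (fun k => (q k)⁻¹)
      = (1 : Matrix (Fin N) (Fin N) ℂ) := by
    rw [Matrix.diagonal_mul_diagonal,
      show (fun k => q k * (q k)⁻¹) = fun _ => (1 : ℂ) from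
        funext fun k => mul_inv_cancel₀ (hq k), Matrix.diagonal_one]
  have hD : Matrix.diagonal (fun k => p k * (q k)⁻¹) * X
      = Matrix.diagonal (fun k => (q k)⁻¹) * (Matrix.diagonal p * X) := by
    rw [← Matrix.mul_assoc, Matrix.diagonal_mul_diagonal,
      show (fun k => (q k)⁻¹ * p k) = fun k => p k * (q k)⁻¹ from
        funext fun k => mul_comm _ _]
  have key : (1 : Matrix (Fin N) (Fin N) ℂ) + Matrix.diagonal (fun k => p k * (q k)⁻¹) * X
      = Matrix.diagonal (fun k => (q k)⁻¹)
          * ((1 + X) * Matrix.diagonal q - Matrix.vecMulVec u x) := by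
    rw [hD, hc, Matrix.add_mul, Matrix.one_mul, add_sub_assoc, Matrix.mul_add, hqq]
  have h2 : (1 + X) * Matrix.diagonal q - Matrix.vecMulVec u x
      = (1 + X) * Matrix.diagonal q *
          (1 - Matrix.vecMulVec ((Matrix.diagonal (fun k => (q k)⁻¹) * (1 + X)⁻¹) *ᵥ u) x) := by
    rw [Matrix.mul_sub, Matrix.mul_one]
    congr 1
    rw [← Matrix.mulVec_mulVec, ← mul_vecMulVec', ← mul_vecMulVec']
    rw [Matrix.mul_assoc (1 + X), ← Matrix.mul_assoc (Matrix.diagonal q), hqq',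
      Matrix.one_mul, Matrix.mul_nonsing_inv_cancel_left _ _ hX]
  have hprod : (∏ k, (q k)⁻¹) * ∏ k, q k = 1 := by
    rw [← Finset.prod_mul_distrib]
    exact Finset.prod_eq_one fun k _ => inv_mul_cancel₀ (hq k)
  rw [Matrix.det_one_add_mul_comm, key, Matrix.det_mul, h2, Matrix.det_mul, Matrix.det_mul,
    det_one_sub_vecMulVec', Matrix.det_diagonal, Matrix.det_diagonal]
  linear_combination ((1 + X).det *
    (1 - x ⬝ᵥ (Matrix.diagonal (fun k => (q k)⁻¹) * (1 + X)⁻¹) *ᵥ u)) * hprod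

lemma detL' (Y : Matrix (Fin N) (Fin N) ℂ) (p q u y : Fin N → ℂ)
    (hp : ∀ k, p k ≠ 0) (hY : IsUnit (1 + Y).det)
    (hc : Y * Matrix.diagonal q = Matrix.diagonal p * Y + Matrix.vecMulVec u y) :
    (1 + Y * Matrix.diagonal (fun k => q k * (p k)⁻¹)).det
      = (1 + Y).det *
        (1 + y ⬝ᵥ ((1 + Y)⁻¹ * Matrix.diagonal (fun k => (p k)⁻¹)) *ᵥ u) := by
  have hpp : Matrix.diagonal p * Matrix.diagonal (fun k => (p k)⁻¹)
      = (1 : Matrix (Fin N) (Fin N) ℂ) := by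
    rw [Matrix.diagonal_mul_diagonal,
      show (fun k => p k * (p k)⁻¹) = fun _ => (1 : ℂ) from
        funext fun k => mul_inv_cancel₀ (hp k), Matrix.diagonal_one]
  have hpp' : Matrix.diagonal (fun k => (p k)⁻¹) * Matrix.diagonal p
      = (1 : Matrix (Fin N) (Fin N) ℂ) := by
    rw [Matrix.diagonal_mul_diagonal,
      show (fun k => (p k)⁻¹ * p k) = fun _ => (1 : ℂ) from
        funext fun k => inv_mul_cancel₀ (hp k), Matrix.diagonal_one]
  have key : (1 : Matrix (Fin N) (Fin N) ℂ) + Y * Matrix.diagonal (fun k => q k * (p k)⁻¹)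
      = (Matrix.diagonal p * (1 + Y) + Matrix.vecMulVec u y)
          * Matrix.diagonal (fun k => (p k)⁻¹) := by
    have h1 : Y * Matrix.diagonal (fun k => q k * (p k)⁻¹)
        = (Matrix.diagonal p * Y + Matrix.vecMulVec u y)
            * Matrix.diagonal (fun k => (p k)⁻¹) := by
      rw [← Matrix.diagonal_mul_diagonal, ← Matrix.mul_assoc, hc]
    rw [h1, Matrix.mul_add, Matrix.mul_one, Matrix.add_mul, Matrix.add_mul, Matrix.add_mul,
      hpp, add_assoc]
  have h2 : Matrix.diagonal p * (1 + Y) + Matrix.vecMulVec u y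
      = Matrix.diagonal p * (1 + Y) *
          (1 + Matrix.vecMulVec (((1 + Y)⁻¹ * Matrix.diagonal (fun k => (p k)⁻¹)) *ᵥ u) y) := by
    have h3 : Matrix.diagonal p * (1 + Y) *
          Matrix.vecMulVec (((1 + Y)⁻¹ * Matrix.diagonal (fun k => (p k)⁻¹)) *ᵥ u) y
        = Matrix.vecMulVec u y := by
      rw [← Matrix.mulVec_mulVec, ← mul_vecMulVec', ← mul_vecMulVec',
        Matrix.mul_assoc (Matrix.diagonal p), Matrix.mul_nonsing_inv_cancel_left _ _ hY,
        ← Matrix.mul_assoc, hpp, Matrix.one_mul]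
    rw [Matrix.mul_add (Matrix.diagonal p * (1 + Y)), Matrix.mul_one, h3]
  have hprod : (∏ k, p k) * ∏ k, (p k)⁻¹ = 1 := by
    rw [← Finset.prod_mul_distrib]
    exact Finset.prod_eq_one fun k _ => mul_inv_cancel₀ (hp k)
  rw [key, Matrix.det_mul, h2, Matrix.det_mul, Matrix.det_mul,
    det_one_add_vecMulVec', Matrix.det_diagonal, Matrix.det_diagonal]
  linear_combination ((1 + Y).det *
    (1 + y ⬝ᵥ ((1 + Y)⁻¹ * Matrix.diagonal (fun k => (p k)⁻¹)) *ᵥ u)) * hprod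

end Aux

noncomputable def dvec {N : ℕ} (l r : Fin N → ℂ) (Ξ : Multiset ℂ) : Fin N → ℂ :=
  fun k => (Ξ.map (fun ξ => (ξ - l k) * (ξ - r k)⁻¹)).prod

lemma Hmat_eq {N : ℕ} (l r : Fin N → ℂ) (Ξ : Multiset ℂ) :
    Hmat l r Ξ = Matrix.diagonal (dvec l r Ξ) := rfl

lemma dot_diag_mulVec {N : ℕ} (u c w : Fin N → ℂ) :
    u ⬝ᵥ (Matrix.diagonal c *ᵥ w) = ∑ k, u k * c k * w k := by
  simp [Matrix.mulVec_diagonal, dotProduct, mul_assoc]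

lemma vecMulVec_mulVec' {N : ℕ} (u v w : Fin N → ℂ) :
    Matrix.vecMulVec u v *ᵥ w = (v ⬝ᵥ w) • u := by
  ext i
  simp only [Matrix.mulVec, dotProduct, Matrix.vecMulVec_apply, Pi.smul_apply,
    smul_eq_mul, Finset.sum_mul]
  exact Finset.sum_congr rfl fun j _ => by ring

theorem stmt_2 {N : ℕ} (A : Matrix (Fin N) (Fin N) ℂ) (l r ℓ a : Fin N → ℂ)
    (Ξ H : Multiset ℂ) (ζ : ℂ)
    (hrank : Matrix.diagonal l * A - A * Matrix.diagonal r = Matrix.vecMulVec ℓ a)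
    (hΞr : ∀ ξ ∈ Ξ, ∀ k, ξ - r k ≠ 0)
    (hHr : ∀ η ∈ H, ∀ k, η - r k ≠ 0)
    (hHl : ∀ η ∈ H, ∀ k, η - l k ≠ 0)
    (hζL : ∀ k, ζ - l k ≠ 0)
    (hζR : ∀ k, ζ - r k ≠ 0)
    (hX : IsUnit (1 + A * Hmat l r Ξ).det)
    (hY : IsUnit (1 + A * Hmat l r H).det) :
    (1 + (A * Hmat l r Ξ) * Matrix.diagonal (fun k => (ζ - l k) * (ζ - r k)⁻¹)).det *
      (1 + (A * Hmat l r H) * Matrix.diagonal (fun k => (ζ - r k) * (ζ - l k)⁻¹)).det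
    = (1 + A * Hmat l r Ξ).det * (1 + A * Hmat l r H).det *
        (1 + (a ᵥ* Hmat l r H) ⬝ᵥ
          ((1 + A * Hmat l r H)⁻¹ *
            (Hmat l r Ξ * (Hmat l r H)⁻¹ * Matrix.diagonal (fun k => (r k - ζ)⁻¹)
              - Matrix.diagonal (fun k => (l k - ζ)⁻¹)) *
            (1 + A * Hmat l r Ξ)⁻¹).mulVec ℓ) := by
  have hA : ∀ i j, (l i - r j) * A i j = ℓ i * a j := by
    intro i j
    have h0 : l i * A i j - A i j * r j = ℓ i * a j := by
      simpa [Matrix.diagonal_mul, Matrix.mul_diagonal, Matrix.vecMulVec_apply] using congrFun (congrFun hrank i) j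
    linear_combination h0
  set d1 : Fin N → ℂ := dvec l r Ξ with hd1def
  set d2 : Fin N → ℂ := dvec l r H with hd2def
  have hd2 : ∀ k, d2 k ≠ 0 := by
    intro k
    show ((H.map (fun η => (η - l k) * (η - r k)⁻¹)).prod) ≠ 0
    apply Multiset.prod_ne_zero
    intro h0
    rw [Multiset.mem_map] at h0
    obtain ⟨η, hη, hval⟩ := h0
    exact (mul_ne_zero (hHl η hη k) (inv_ne_zero (hHr η hη k))) hval
  set x : Fin N → ℂ := fun k => a k * d1 k with hxdef
  set y : Fin N → ℂ := fun k => a k * d2 k with hydef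
  set m : Fin N → ℂ := fun k => d1 k * (d2 k)⁻¹ * (r k - ζ)⁻¹ with hmdef
  set n : Fin N → ℂ := fun k => (l k - ζ)⁻¹ with hndef
  set V : Matrix (Fin N) (Fin N) ℂ := (1 + A * Matrix.diagonal d1)⁻¹ with hVdef
  set W : Matrix (Fin N) (Fin N) ℂ := (1 + A * Matrix.diagonal d2)⁻¹ with hWdef
  have hX' : IsUnit (1 + A * Matrix.diagonal d1).det := hX
  have hY' : IsUnit (1 + A * Matrix.diagonal d2).det := hY
  have hVc : (1 + A * Matrix.diagonal d1) * V = 1 := Matrix.mul_nonsing_inv _ hX'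
  have hWc : W * (1 + A * Matrix.diagonal d2) = 1 := Matrix.nonsing_inv_mul _ hY'
  -- shift relations
  have hshiftX : Matrix.diagonal (fun k => ζ - l k) * (A * Matrix.diagonal d1)
      = (A * Matrix.diagonal d1) * Matrix.diagonal (fun k => ζ - r k)
        - Matrix.vecMulVec ℓ x := by
    ext i j
    simp only [Matrix.sub_apply, Matrix.diagonal_mul, Matrix.mul_diagonal,
      Matrix.vecMulVec_apply, hxdef]
    linear_combination (-(d1 j)) * hA i j
  have hshiftY : (A * Matrix.diagonal d2) * Matrix.diagonal (fun k => ζ - r k)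
      = Matrix.diagonal (fun k => ζ - l k) * (A * Matrix.diagonal d2)
        + Matrix.vecMulVec ℓ y := by
    ext i j
    simp only [Matrix.add_apply, Matrix.diagonal_mul, Matrix.mul_diagonal,
      Matrix.vecMulVec_apply, hydef]
    linear_combination (d2 j) * hA i j
  have det1 : (1 + A * Matrix.diagonal d1
        * Matrix.diagonal (fun k => (ζ - l k) * (ζ - r k)⁻¹)).det
      = (1 + A * Matrix.diagonal d1).det
        * (1 - x ⬝ᵥ (Matrix.diagonal (fun k => (ζ - r k)⁻¹) * V) *ᵥ ℓ) :=
    detR' (A * Matrix.diagonal d1) (fun k => ζ - l k) (fun k => ζ - r k) ℓ x hζR hX' hshiftX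
  have det2 : (1 + A * Matrix.diagonal d2
        * Matrix.diagonal (fun k => (ζ - r k) * (ζ - l k)⁻¹)).det
      = (1 + A * Matrix.diagonal d2).det
        * (1 + y ⬝ᵥ (W * Matrix.diagonal (fun k => (ζ - l k)⁻¹)) *ᵥ ℓ) :=
    detL' (A * Matrix.diagonal d2) (fun k => ζ - l k) (fun k => ζ - r k) ℓ y hζL hY' hshiftY
  -- diagonal inverse
  have hd2inv : (Matrix.diagonal d2)⁻¹ = Matrix.diagonal (fun k => (d2 k)⁻¹) :=
    Matrix.inv_eq_right_inv (by
      rw [Matrix.diagonal_mul_diagonal,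
        show (fun k => d2 k * (d2 k)⁻¹) = fun _ => (1 : ℂ) from
          funext fun k => mul_inv_cancel₀ (hd2 k), Matrix.diagonal_one])
  have hMm : Matrix.diagonal d1 * (Matrix.diagonal d2)⁻¹
        * Matrix.diagonal (fun k => (r k - ζ)⁻¹) = Matrix.diagonal m := by
    rw [hd2inv, Matrix.diagonal_mul_diagonal, Matrix.diagonal_mul_diagonal]
  have hy : a ᵥ* Matrix.diagonal d2 = y := funext fun k => Matrix.vecMul_diagonal a d2 k
  -- key rank-one matrix identity
  have hkey : (A * Matrix.diagonal d2) * Matrix.diagonal m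
        - Matrix.diagonal n * (A * Matrix.diagonal d1)
      = Matrix.diagonal n * Matrix.vecMulVec ℓ y * Matrix.diagonal m := by
    ext i j
    have hli : l i - ζ ≠ 0 := fun h => hζL i (by linear_combination -h)
    have hrj : r j - ζ ≠ 0 := fun h => hζR j (by linear_combination -h)
    simp only [Matrix.sub_apply, Matrix.mul_diagonal, Matrix.diagonal_mul,
      Matrix.vecMulVec_apply]
    have hu : (r j - ζ)⁻¹ * (r j - ζ) = 1 := inv_mul_cancel₀ hrj
    have hv : (l i - ζ)⁻¹ * (l i - ζ) = 1 := inv_mul_cancel₀ hli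
    have hw : (d2 j)⁻¹ * d2 j = 1 := inv_mul_cancel₀ (hd2 j)
    show A i j * d2 j * (d1 j * (d2 j)⁻¹ * (r j - ζ)⁻¹)
        - (l i - ζ)⁻¹ * (A i j * d1 j)
      = (l i - ζ)⁻¹ * (ℓ i * (a j * d2 j)) * (d1 j * (d2 j)⁻¹ * (r j - ζ)⁻¹)
    linear_combination
      (A i j * d1 j * (r j - ζ)⁻¹
        - (l i - ζ)⁻¹ * ℓ i * a j * d1 j * (r j - ζ)⁻¹) * hw
      + ((l i - ζ)⁻¹ * d1 j * (r j - ζ)⁻¹) * hA i j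
      + (A i j * d1 j * (l i - ζ)⁻¹) * hu
      - (A i j * d1 j * (r j - ζ)⁻¹) * hv
  -- scalar facts
  have f1 : x ⬝ᵥ (Matrix.diagonal (fun k => (ζ - r k)⁻¹) * V) *ᵥ ℓ
      = -(y ⬝ᵥ (Matrix.diagonal m * V) *ᵥ ℓ) := by
    rw [← Matrix.mulVec_mulVec, ← Matrix.mulVec_mulVec, dot_diag_mulVec, dot_diag_mulVec,
      ← Finset.sum_neg_distrib]
    refine Finset.sum_congr rfl fun k _ => ?_
    have hk1 : x k * (ζ - r k)⁻¹ = -(y k * m k) := by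
      show a k * d1 k * (ζ - r k)⁻¹
        = -(a k * d2 k * (d1 k * (d2 k)⁻¹ * (r k - ζ)⁻¹))
      rw [show r k - ζ = -(ζ - r k) from by ring, inv_neg]
      have hw : (d2 k)⁻¹ * d2 k = 1 := inv_mul_cancel₀ (hd2 k)
      linear_combination (-(a k * d1 k * (ζ - r k)⁻¹)) * hw
    linear_combination ((V *ᵥ ℓ) k) * hk1
  have hnm : Matrix.diagonal n = -Matrix.diagonal (fun k => (ζ - l k)⁻¹) := by
    have hn' : n = fun k => -((ζ - l k)⁻¹) := funext fun k => by
      show (l k - ζ)⁻¹ = -((ζ - l k)⁻¹)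
      rw [show l k - ζ = -(ζ - l k) from by ring, inv_neg]
    rw [hn']
    ext i j
    by_cases h : i = j
    · subst h; simp
    · simp [Matrix.diagonal_apply_ne _ h]
  have f2 : y ⬝ᵥ (W * Matrix.diagonal (fun k => (ζ - l k)⁻¹)) *ᵥ ℓ
      = -(y ⬝ᵥ (W * Matrix.diagonal n) *ᵥ ℓ) := by
    rw [hnm, Matrix.mul_neg, Matrix.neg_mulVec, dotProduct_neg, neg_neg]
  have f4 : y ⬝ᵥ ((W * Matrix.diagonal n) * Matrix.vecMulVec ℓ y * (Matrix.diagonal m * V)) *ᵥ ℓ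
      = (y ⬝ᵥ (W * Matrix.diagonal n) *ᵥ ℓ) * (y ⬝ᵥ (Matrix.diagonal m * V) *ᵥ ℓ) := by
    rw [← Matrix.mulVec_mulVec, ← Matrix.mulVec_mulVec, vecMulVec_mulVec',
      Matrix.mulVec_smul, dotProduct_smul, smul_eq_mul]
    ring
  -- the key factorization identity
  have e1' : Matrix.diagonal m - Matrix.diagonal n
      = (1 + A * Matrix.diagonal d2) * Matrix.diagonal m
        - Matrix.diagonal n * (1 + A * Matrix.diagonal d1)
        - Matrix.diagonal n * Matrix.vecMulVec ℓ y * Matrix.diagonal m := by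
    rw [Matrix.add_mul, Matrix.one_mul, Matrix.mul_add, Matrix.mul_one, ← hkey]
    abel
  have h4 : W * ((1 + A * Matrix.diagonal d2) * Matrix.diagonal m) * V
      = Matrix.diagonal m * V := by
    rw [← Matrix.mul_assoc W, hWc, Matrix.one_mul]
  have h5 : W * (Matrix.diagonal n * (1 + A * Matrix.diagonal d1)) * V
      = W * Matrix.diagonal n := by
    rw [← Matrix.mul_assoc W, Matrix.mul_assoc (W * Matrix.diagonal n), hVc, Matrix.mul_one]
  have h6 : W * (Matrix.diagonal n * Matrix.vecMulVec ℓ y * Matrix.diagonal m) * V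
      = (W * Matrix.diagonal n) * Matrix.vecMulVec ℓ y * (Matrix.diagonal m * V) := by
    simp only [Matrix.mul_assoc]
  have hstar : W * (Matrix.diagonal m - Matrix.diagonal n) * V
      = Matrix.diagonal m * V - W * Matrix.diagonal n
        - (W * Matrix.diagonal n) * Matrix.vecMulVec ℓ y * (Matrix.diagonal m * V) := by
    rw [e1', Matrix.mul_sub, Matrix.mul_sub, Matrix.sub_mul, Matrix.sub_mul, h4, h5, h6]
  -- assemble
  rw [Hmat_eq l r Ξ, Hmat_eq l r H, ← hd1def, ← hd2def, ← hVdef, ← hWdef, det1, det2,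
    hy, hMm, hstar, Matrix.sub_mulVec, Matrix.sub_mulVec,
    dotProduct_sub, dotProduct_sub, f4, f1, f2]
  ring
end

section
/- Let Ξ and H be finite sets of complex numbers with the elements of H pairwise distinct and |Ξ| < |H|, and let L, R be diagonal complex matrices such that all matrices (ζ−R) for ζ ∈ H are invertible and all H_ξ = (ξ−L)(ξ−R)⁻¹ for ξ ∈ Ξ∪H are defined and invertible. Then Σ_{ζ∈H} Γ_ζ(Ξ,H)·[H_Ξ H_H⁻¹ (R−ζ)⁻¹ − (L−ζ)⁻¹] = 0, where H_Ξ = ∏_{ξ∈Ξ} H_ξ, H_H = ∏_{η∈H} H_η, and Γ_ζ(Ξ,H) = ∏_{ξ∈Ξ}(ζ−ξ)/∏_{η∈H,η≠ζ}(ζ−η). -/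
open Matrix

open Polynomial Finset in
lemma lagrange_multiset_aux (Ξ : Multiset ℂ) (H : Finset ℂ) (hcard : Ξ.card < H.card) (t : ℂ) :
    ∑ ζ ∈ H, (Ξ.map (fun ξ => ζ - ξ)).prod * ∏ η ∈ H.erase ζ, ((ζ - η)⁻¹ * (t - η))
      = (Ξ.map (fun ξ => t - ξ)).prod := by
  set P : ℂ[X] := (Ξ.map (fun ξ => X - C ξ)).prod with hP
  have hdeg : P.degree < (H.card : ℕ) := by
    refine lt_of_le_of_lt (degree_le_natDegree) ?_
    rw [natDegree_multiset_prod_X_sub_C_eq_card]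
    exact_mod_cast hcard
  have hinj : Set.InjOn id (H : Set ℂ) := fun x _ y _ h => h
  have heq := Lagrange.eq_interpolate (v := id) hinj hdeg
  have hev : ∀ s : ℂ, P.eval s = (Ξ.map (fun ξ => s - ξ)).prod := by
    intro s
    rw [hP, eval_multiset_prod, Multiset.map_map]
    congr 1
    apply Multiset.map_congr rfl
    intro x _; simp
  have h2 := congrArg (eval t) heq
  rw [hev t] at h2
  rw [h2, Lagrange.interpolate_apply, eval_finset_sum]
  refine Finset.sum_congr rfl fun ζ hζ => ?_
  rw [eval_mul, eval_C, id_eq, hev ζ, Lagrange.basis, eval_prod]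
  congr 1
  refine Finset.prod_congr rfl fun η hη => ?_
  simp [Lagrange.basisDivisor]

open Finset in
lemma key_sum_aux (Ξ : Multiset ℂ) (H : Finset ℂ) (hcard : Ξ.card < H.card) (t : ℂ)
    (ht : ∀ η ∈ H, t - η ≠ 0) :
    ∑ ζ ∈ H, ((Ξ.map (fun ξ => ζ - ξ)).prod / ∏ η ∈ H.erase ζ, (ζ - η)) * (t - ζ)⁻¹
      = (Ξ.map (fun ξ => t - ξ)).prod / ∏ η ∈ H, (t - η) := by
  have hD : ∏ η ∈ H, (t - η) ≠ 0 := Finset.prod_ne_zero_iff.mpr ht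
  rw [eq_div_iff hD, Finset.sum_mul, ← lagrange_multiset_aux Ξ H hcard t]
  refine Finset.sum_congr rfl fun ζ hζ => ?_
  rw [Finset.prod_mul_distrib, Finset.prod_inv_distrib]
  have h1 : (∏ η ∈ H.erase ζ, (t - η)) * (t - ζ) = ∏ η ∈ H, (t - η) :=
    Finset.prod_erase_mul H _ hζ
  have htζ : t - ζ ≠ 0 := ht ζ hζ
  rw [← h1]
  linear_combination ((Ξ.map (fun ξ => ζ - ξ)).prod * (∏ η ∈ H.erase ζ, (ζ - η))⁻¹ *
    ∏ η ∈ H.erase ζ, (t - η)) * inv_mul_cancel₀ htζ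

theorem stmt_5 {N : ℕ} (l r : Fin N → ℂ) (Ξ : Multiset ℂ) (H : Finset ℂ)
    (hcard : Ξ.card < H.card)
    (hΞr : ∀ ξ ∈ Ξ, ∀ k, ξ - r k ≠ 0)
    (hΞl : ∀ ξ ∈ Ξ, ∀ k, ξ - l k ≠ 0)
    (hHr : ∀ η ∈ H, ∀ k, η - r k ≠ 0)
    (hHl : ∀ η ∈ H, ∀ k, η - l k ≠ 0) :
    ∑ ζ ∈ H, ((Ξ.map (fun ξ => ζ - ξ)).prod / ∏ η ∈ H.erase ζ, (ζ - η)) •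
        (Hmat l r Ξ * (Hmat l r H.val)⁻¹ * Matrix.diagonal (fun k => (r k - ζ)⁻¹)
          - Matrix.diagonal (fun k => (l k - ζ)⁻¹))
      = 0 := by
  set A : Fin N → ℂ := fun k => (Ξ.map (fun ξ => (ξ - l k) * (ξ - r k)⁻¹)).prod with hA
  set B : Fin N → ℂ := fun k => (H.val.map (fun ξ => (ξ - l k) * (ξ - r k)⁻¹)).prod with hB
  have hBne : ∀ k, B k ≠ 0 := by
    intro k
    rw [hB]
    apply Multiset.prod_ne_zero
    intro h0
    obtain ⟨η, hη, hval⟩ := Multiset.mem_map.mp h0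
    exact mul_ne_zero (hHl η hη k) (inv_ne_zero (hHr η hη k)) hval
  have hinv : (Hmat l r H.val)⁻¹ = Matrix.diagonal (fun k => (B k)⁻¹) := by
    apply Matrix.inv_eq_right_inv
    rw [Hmat, Matrix.diagonal_mul_diagonal]
    have hthis : (fun k => (H.val.map (fun ξ => (ξ - l k) * (ξ - r k)⁻¹)).prod * (B k)⁻¹)
        = fun _ => (1 : ℂ) := funext fun k => mul_inv_cancel₀ (hBne k)
    rw [hthis, Matrix.diagonal_one]
  have hrw : ∀ ζ : ℂ, Hmat l r Ξ * (Hmat l r H.val)⁻¹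
        * Matrix.diagonal (fun k => (r k - ζ)⁻¹) - Matrix.diagonal (fun k => (l k - ζ)⁻¹)
      = Matrix.diagonal (fun k => A k * (B k)⁻¹ * (r k - ζ)⁻¹)
        - Matrix.diagonal (fun k => (l k - ζ)⁻¹) := by
    intro ζ
    rw [hinv, Hmat, Matrix.diagonal_mul_diagonal, Matrix.diagonal_mul_diagonal]
  ext i j
  rw [Matrix.sum_apply, Matrix.zero_apply]
  by_cases hij : i = j
  · subst hij
    have hstep : ∀ ζ ∈ H, (((Ξ.map (fun ξ => ζ - ξ)).prod / ∏ η ∈ H.erase ζ, (ζ - η)) •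
          (Hmat l r Ξ * (Hmat l r H.val)⁻¹ * Matrix.diagonal (fun k => (r k - ζ)⁻¹)
            - Matrix.diagonal (fun k => (l k - ζ)⁻¹))) i i
        = ((Ξ.map (fun ξ => ζ - ξ)).prod / ∏ η ∈ H.erase ζ, (ζ - η)) *
            (A i * (B i)⁻¹ * (r i - ζ)⁻¹ - (l i - ζ)⁻¹) := by
      intro ζ _
      rw [hrw ζ]
      simp [Matrix.diagonal_apply_eq]
    rw [Finset.sum_congr rfl hstep]
    have hr : ∀ η ∈ H, r i - η ≠ 0 :=
      fun η hη => sub_ne_zero.mpr (Ne.symm (sub_ne_zero.mp (hHr η hη i)))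
    have hl : ∀ η ∈ H, l i - η ≠ 0 :=
      fun η hη => sub_ne_zero.mpr (Ne.symm (sub_ne_zero.mp (hHl η hη i)))
    have hsum : ∑ ζ ∈ H, ((Ξ.map (fun ξ => ζ - ξ)).prod / ∏ η ∈ H.erase ζ, (ζ - η)) *
          (A i * (B i)⁻¹ * (r i - ζ)⁻¹ - (l i - ζ)⁻¹)
        = A i * (B i)⁻¹ * ((Ξ.map (fun ξ => r i - ξ)).prod / ∏ η ∈ H, (r i - η))
          - ((Ξ.map (fun ξ => l i - ξ)).prod / ∏ η ∈ H, (l i - η)) := by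
      rw [← key_sum_aux Ξ H hcard (r i) hr, ← key_sum_aux Ξ H hcard (l i) hl,
        Finset.mul_sum, ← Finset.sum_sub_distrib]
      refine Finset.sum_congr rfl fun ζ _ => ?_
      ring
    rw [hsum]
    have hAP : A i * (Ξ.map (fun ξ => r i - ξ)).prod = (Ξ.map (fun ξ => l i - ξ)).prod := by
      rw [hA, ← Multiset.prod_map_mul]
      congr 1
      apply Multiset.map_congr rfl
      intro ξ hξ
      have h := inv_mul_cancel₀ (hΞr ξ hξ i)
      calc (ξ - l i) * (ξ - r i)⁻¹ * (r i - ξ)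
          = -((ξ - l i) * ((ξ - r i)⁻¹ * (ξ - r i))) := by ring
        _ = l i - ξ := by rw [h]; ring
    have hBP : B i * ∏ η ∈ H, (r i - η) = ∏ η ∈ H, (l i - η) := by
      rw [hB, Finset.prod_eq_multiset_prod, Finset.prod_eq_multiset_prod,
        ← Multiset.prod_map_mul]
      congr 1
      apply Multiset.map_congr rfl
      intro η hη
      have h := inv_mul_cancel₀ (hHr η hη i)
      calc (η - l i) * (η - r i)⁻¹ * (r i - η)
          = -((η - l i) * ((η - r i)⁻¹ * (η - r i))) := by ring
        _ = l i - η := by rw [h]; ring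
    have hDr : ∏ η ∈ H, (r i - η) ≠ 0 := Finset.prod_ne_zero_iff.mpr hr
    have hB0 := hBne i
    rw [sub_eq_zero, ← hAP, ← hBP]
    field_simp
  · have hstep : ∀ ζ ∈ H, (((Ξ.map (fun ξ => ζ - ξ)).prod / ∏ η ∈ H.erase ζ, (ζ - η)) •
          (Hmat l r Ξ * (Hmat l r H.val)⁻¹ * Matrix.diagonal (fun k => (r k - ζ)⁻¹)
            - Matrix.diagonal (fun k => (l k - ζ)⁻¹))) i j = 0 := by
      intro ζ _
      rw [hrw ζ]
      simp [Matrix.diagonal_apply_ne _ hij]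
    rw [Finset.sum_congr rfl hstep, Finset.sum_const_zero]
end

section
/- (Two-shift Fay / quadrilateral identity.) Let A, L, R satisfy LA − AR = |ℓ⟩⟨a| with L, R diagonal, and let ξ, η, ζ be three pairwise distinct complex numbers with all shifts well-defined. Then (ζ−η)·Ω[{ξ}]·Ω[{η,ζ}] + (η−ξ)·Ω[{ζ}]·Ω[{ξ,η}] + (ξ−ζ)·Ω[{η}]·Ω[{ζ,ξ}] = 0. -/
open Matrix

/-- Shifted dark-soliton determinant `Ω[S] = det(1 + A ∏_{s∈S}(s−L)(s−R)⁻¹)`. -/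
noncomputable def Omega {N : ℕ} (A : Matrix (Fin N) (Fin N) ℂ) (l r : Fin N → ℂ)
    (S : Multiset ℂ) : ℂ :=
  (1 + A * Matrix.diagonal (fun k => (S.map (fun s => (s - l k) * (s - r k)⁻¹)).prod)).det

set_option linter.dupNamespace false

namespace FayAux

variable {N : ℕ} {R : Type*} [CommRing R]

/-- one-shift cleared determinant -/
noncomputable def Fd (B : Matrix (Fin N) (Fin N) R) (r u a : Fin N → R) (s : R) : R :=
  (B * Matrix.diagonal (fun k => s - r k) - vecMulVec u a).det

/-- two-shift cleared determinant -/
noncomputable def Gd (B : Matrix (Fin N) (Fin N) R) (r u a w : Fin N → R) (s t : R) : R :=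
  (B * Matrix.diagonal (fun k => (s - r k) * (t - r k))
    - vecMulVec u (fun k => (s + t - r k) * a k) + vecMulVec w a).det

lemma mul_vecMulVec (B : Matrix (Fin N) (Fin N) R) (c a : Fin N → R) :
    B * vecMulVec c a = vecMulVec (B *ᵥ c) a := by
  ext i j
  simp [Matrix.mul_apply, vecMulVec_apply, Matrix.mulVec, dotProduct, Finset.sum_mul, mul_assoc]

lemma diagonal_mul_vecMulVec (d c a : Fin N → R) :
    Matrix.diagonal d * vecMulVec c a = vecMulVec (fun k => d k * c k) a := by
  ext i j
  simp [Matrix.diagonal_mul, vecMulVec_apply, mul_assoc]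

lemma neg_vecMulVec (c a : Fin N → R) : -vecMulVec c a = vecMulVec (fun k => -c k) a := by
  ext i j; simp [vecMulVec_apply]

lemma det_one_sub_vecMulVec (v a : Fin N → R) :
    (1 - vecMulVec v a).det = 1 - a ⬝ᵥ v := by
  rw [sub_eq_add_neg, neg_vecMulVec, vecMulVec_eq Unit,
    Matrix.det_one_add_replicateCol_mul_replicateRow]
  simp [dotProduct]
  ring


lemma Fd_eq {K : Type*} [Field K] (B : Matrix (Fin N) (Fin N) K) (r u a : Fin N → K) (s : K)
    (hB : IsUnit B.det) (hs : ∀ k, s - r k ≠ 0) :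
    Fd B r u a s
      = B.det * (∏ k, (s - r k)) * (1 - ∑ k, a k * (B⁻¹ *ᵥ u) k / (s - r k)) := by
  set c := B⁻¹ *ᵥ u with hc
  have hBc : B *ᵥ c = u := by
    rw [hc, Matrix.mulVec_mulVec, Matrix.mul_nonsing_inv _ hB, Matrix.one_mulVec]
  have h1 : B * Matrix.diagonal (fun k => s - r k) - vecMulVec u a
      = B * (Matrix.diagonal (fun k => s - r k) - vecMulVec c a) := by
    rw [Matrix.mul_sub, mul_vecMulVec, hBc]
  have h2 : Matrix.diagonal (fun k => s - r k) - vecMulVec c a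
      = Matrix.diagonal (fun k => s - r k)
        * (1 - vecMulVec (fun k => (s - r k)⁻¹ * c k) a) := by
    rw [Matrix.mul_sub, mul_one, diagonal_mul_vecMulVec]
    have harg : (fun k => (s - r k) * ((s - r k)⁻¹ * c k)) = c := by
      funext k
      rw [← mul_assoc, mul_inv_cancel₀ (hs k), one_mul]
    rw [harg]
  rw [Fd, h1, Matrix.det_mul, h2, Matrix.det_mul, Matrix.det_diagonal,
    det_one_sub_vecMulVec, mul_assoc]
  congr 2
  rw [dotProduct]
  congr 1
  refine Finset.sum_congr rfl fun k _ => ?_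
  rw [div_eq_mul_inv]; ring


lemma Gd_eq {K : Type*} [Field K] (B : Matrix (Fin N) (Fin N) K) (r u a w : Fin N → K)
    (s t : K) (hB : IsUnit B.det) (hs : ∀ k, s - r k ≠ 0) (ht : ∀ k, t - r k ≠ 0) :
    Gd B r u a w s t
      = B.det * ((∏ k, (s - r k)) * ∏ k, (t - r k)) *
        ((1 - (∑ k, a k * (B⁻¹ *ᵥ u) k / (s - r k))
            - s * ∑ k, a k * (B⁻¹ *ᵥ u) k / ((s - r k) * (t - r k)))
          * (1 + ∑ k, a k * (B⁻¹ *ᵥ w) k / ((s - r k) * (t - r k)))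
        + ((∑ k, a k * (B⁻¹ *ᵥ w) k / (s - r k))
            + s * ∑ k, a k * (B⁻¹ *ᵥ w) k / ((s - r k) * (t - r k)))
          * ∑ k, a k * (B⁻¹ *ᵥ u) k / ((s - r k) * (t - r k))) := by
  set c := B⁻¹ *ᵥ u with hc
  set c' := B⁻¹ *ᵥ w with hc'
  have hBc : B *ᵥ c = u := by
    rw [hc, Matrix.mulVec_mulVec, Matrix.mul_nonsing_inv _ hB, Matrix.one_mulVec]
  have hBc' : B *ᵥ c' = w := by
    rw [hc', Matrix.mulVec_mulVec, Matrix.mul_nonsing_inv _ hB, Matrix.one_mulVec]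
  set d2 : Fin N → K := fun k => (s - r k) * (t - r k) with hd2
  have hd2ne : ∀ k, d2 k ≠ 0 := fun k => mul_ne_zero (hs k) (ht k)
  set U : Matrix (Fin N) (Fin 2) K :=
    Matrix.of fun k i => if i = 0 then -((d2 k)⁻¹ * c k) else (d2 k)⁻¹ * c' k with hU
  set W : Matrix (Fin 2) (Fin N) K :=
    Matrix.of fun i k => if i = 0 then (s + t - r k) * a k else a k with hW
  have h1 : B * Matrix.diagonal d2
      - vecMulVec u (fun k => (s + t - r k) * a k) + vecMulVec w a
      = B * (Matrix.diagonal d2 * (1 + U * W)) := by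
    have h2 : Matrix.diagonal d2 * (1 + U * W)
        = Matrix.diagonal d2 - vecMulVec c (fun k => (s + t - r k) * a k)
          + vecMulVec c' a := by
      ext i j
      rw [Matrix.diagonal_mul]
      simp only [Matrix.add_apply, Matrix.sub_apply, Matrix.mul_apply,
        Fin.sum_univ_two, hU, hW, Matrix.of_apply, vecMulVec_apply,
        Matrix.diagonal_apply]
      norm_num
      have hdi := hd2ne i
      by_cases hij : i = j
      · subst hij
        simp only [Matrix.one_apply_eq, ↓reduceIte]
        field_simp
        ring
      · simp only [hij, if_false, Matrix.one_apply_ne hij]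
        field_simp
        ring
    rw [h2, Matrix.mul_add, Matrix.mul_sub, mul_vecMulVec, mul_vecMulVec, hBc, hBc']
  rw [Gd, h1, Matrix.det_mul, Matrix.det_mul, Matrix.det_diagonal,
    Matrix.det_one_add_mul_comm, Matrix.det_fin_two]
  have prodsplit : ∏ k, d2 k = (∏ k, (s - r k)) * ∏ k, (t - r k) :=
    Finset.prod_mul_distrib
  rw [prodsplit]
  have e00 : ((1 + W * U) : Matrix (Fin 2) (Fin 2) K) 0 0
      = 1 - ((∑ k, a k * c k / (s - r k))
          + s * ∑ k, a k * c k / ((s - r k) * (t - r k))) := by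
    simp only [Matrix.add_apply, Matrix.one_apply_eq, Matrix.mul_apply, hU, hW,
      Matrix.of_apply, if_pos rfl]
    rw [Finset.mul_sum, ← Finset.sum_add_distrib, sub_eq_add_neg,
      ← Finset.sum_neg_distrib]
    congr 1
    refine Finset.sum_congr rfl fun k _ => ?_
    have h1' := hs k; have h2' := ht k
    have h3' : (s - r k) * (t - r k) ≠ 0 := mul_ne_zero h1' h2'
    simp only [hd2, ↓reduceIte]
    field_simp
    ring
  have e01 : ((1 + W * U) : Matrix (Fin 2) (Fin 2) K) 0 1
      = (∑ k, a k * c' k / (s - r k))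
          + s * ∑ k, a k * c' k / ((s - r k) * (t - r k)) := by
    simp only [Matrix.add_apply, Matrix.mul_apply, hU, hW, Matrix.of_apply]
    norm_num
    rw [Finset.mul_sum, ← Finset.sum_add_distrib]
    refine Finset.sum_congr rfl fun k _ => ?_
    have h1' := hs k; have h2' := ht k
    have h3' : (s - r k) * (t - r k) ≠ 0 := mul_ne_zero h1' h2'
    simp only [hd2]
    field_simp
    ring
  have e10 : ((1 + W * U) : Matrix (Fin 2) (Fin 2) K) 1 0
      = -∑ k, a k * c k / ((s - r k) * (t - r k)) := by
    simp only [Matrix.add_apply, Matrix.mul_apply, hU, hW, Matrix.of_apply]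
    norm_num
    refine Finset.sum_congr rfl fun k _ => ?_
    simp only [hd2]
    rw [div_eq_mul_inv]
    ring
  have e11 : ((1 + W * U) : Matrix (Fin 2) (Fin 2) K) 1 1
      = 1 + ∑ k, a k * c' k / ((s - r k) * (t - r k)) := by
    simp only [Matrix.add_apply, Matrix.one_apply_eq, Matrix.mul_apply, hU, hW,
      Matrix.of_apply]
    norm_num
    refine Finset.sum_congr rfl fun k _ => ?_
    simp only [hd2]
    rw [div_eq_mul_inv]
    ring
  rw [e00, e01, e10, e11]
  ring



lemma cross {K : Type*} [Field K] (r x y : Fin N → K) (s t : K)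
    (hs : ∀ k, s - r k ≠ 0) (ht : ∀ k, t - r k ≠ 0) (hst : s ≠ t) :
    ∑ k, x k * y k / ((s - r k) * (t - r k))
      = ((∑ k, x k * y k / (s - r k)) - ∑ k, x k * y k / (t - r k)) / (t - s) := by
  rw [eq_div_iff (sub_ne_zero.mpr (Ne.symm hst)), Finset.sum_mul,
    ← Finset.sum_sub_distrib]
  refine Finset.sum_congr rfl fun k _ => ?_
  have h1 := hs k; have h2 := ht k
  field_simp
  ring

lemma fay_core {K : Type*} [Field K] (B : Matrix (Fin N) (Fin N) K) (r u a w : Fin N → K)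
    (ξ η ζ : K) (hB : IsUnit B.det) (hξη : ξ ≠ η) (hηζ : η ≠ ζ) (hζξ : ζ ≠ ξ)
    (hξr : ∀ k, ξ - r k ≠ 0) (hηr : ∀ k, η - r k ≠ 0) (hζr : ∀ k, ζ - r k ≠ 0) :
    (ζ - η) * Fd B r u a ξ * Gd B r u a w η ζ
      + (η - ξ) * Fd B r u a ζ * Gd B r u a w ξ η
      + (ξ - ζ) * Fd B r u a η * Gd B r u a w ζ ξ = 0 := by
  rw [Fd_eq B r u a ξ hB hξr, Fd_eq B r u a ζ hB hζr, Fd_eq B r u a η hB hηr,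
      Gd_eq B r u a w η ζ hB hηr hζr, Gd_eq B r u a w ξ η hB hξr hηr,
      Gd_eq B r u a w ζ ξ hB hζr hξr,
      cross r a (B⁻¹ *ᵥ u) η ζ hηr hζr hηζ, cross r a (B⁻¹ *ᵥ u) ξ η hξr hηr hξη,
      cross r a (B⁻¹ *ᵥ u) ζ ξ hζr hξr hζξ,
      cross r a (B⁻¹ *ᵥ w) η ζ hηr hζr hηζ, cross r a (B⁻¹ *ᵥ w) ξ η hξr hηr hξη,
      cross r a (B⁻¹ *ᵥ w) ζ ξ hζr hξr hζξ]
  have h1 : ζ - η ≠ 0 := sub_ne_zero.mpr (Ne.symm hηζ)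
  have h2 : η - ξ ≠ 0 := sub_ne_zero.mpr (Ne.symm hξη)
  have h3 : ξ - ζ ≠ 0 := sub_ne_zero.mpr (Ne.symm hζξ)
  field_simp
  ring

lemma Fd_map {S : Type*} [CommRing S] (f : R →+* S) (B : Matrix (Fin N) (Fin N) R)
    (r u a : Fin N → R) (s : R) :
    Fd (B.map f) (f ∘ r) (f ∘ u) (f ∘ a) (f s) = f (Fd B r u a s) := by
  unfold Fd
  rw [RingHom.map_det]
  congr 1
  ext i j
  simp [Matrix.mul_diagonal, vecMulVec_apply, Matrix.map_apply, map_sub, _root_.map_mul]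

lemma Gd_map {S : Type*} [CommRing S] (f : R →+* S) (B : Matrix (Fin N) (Fin N) R)
    (r u a w : Fin N → R) (s t : R) :
    Gd (B.map f) (f ∘ r) (f ∘ u) (f ∘ a) (f ∘ w) (f s) (f t) = f (Gd B r u a w s t) := by
  unfold Gd
  rw [RingHom.map_det]
  congr 1
  ext i j
  simp [Matrix.mul_diagonal, vecMulVec_apply, Matrix.map_apply, map_sub, _root_.map_mul, _root_.map_add]


lemma fay_generic (B : Matrix (Fin N) (Fin N) ℂ) (r u a w : Fin N → ℂ) (ξ η ζ : ℂ)
    (hξη : ξ ≠ η) (hηζ : η ≠ ζ) (hζξ : ζ ≠ ξ)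
    (hξr : ∀ k, ξ - r k ≠ 0) (hηr : ∀ k, η - r k ≠ 0) (hζr : ∀ k, ζ - r k ≠ 0) :
    (ζ - η) * Fd B r u a ξ * Gd B r u a w η ζ
      + (η - ξ) * Fd B r u a ζ * Gd B r u a w ξ η
      + (ξ - ζ) * Fd B r u a η * Gd B r u a w ζ ξ = 0 := by
  classical
  set K := RatFunc ℂ with hK
  let g : Polynomial ℂ →+* K := algebraMap (Polynomial ℂ) K
  have hginj : Function.Injective g := IsFractionRing.injective (Polynomial ℂ) K
  let f : ℂ →+* Polynomial ℂ := Polynomial.C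
  have hgfinj : Function.Injective (g.comp f) := RingHom.injective (g.comp f)
  set BX : Matrix (Fin N) (Fin N) (Polynomial ℂ) := charmatrix (-B) with hBX
  have hBXdet : BX.det ≠ 0 := (Matrix.charpoly_monic (-B)).ne_zero
  have hBunit : IsUnit (BX.map g).det := by
    have hdet : (BX.map ⇑g).det = g BX.det := (RingHom.map_det g BX).symm
    rw [hdet]
    exact isUnit_iff_ne_zero.mpr fun h => hBXdet (hginj (h.trans (map_zero g).symm))
  have hne : ∀ x y : ℂ, x ≠ y → g (f x) ≠ g (f y) := fun x y hxy h =>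
    hxy (hgfinj h)
  have hnz : ∀ (x : ℂ) (y : Fin N → ℂ), (∀ k, x - y k ≠ 0) →
      ∀ k, g (f x) - (⇑g ∘ (⇑f ∘ y)) k ≠ 0 := by
    intro x y hy k h
    apply hy k
    apply hgfinj
    rw [RingHom.comp_apply, map_sub, map_sub, map_zero]
    exact h
  have key3 : (f ζ - f η) * Fd BX (⇑f ∘ r) (⇑f ∘ u) (⇑f ∘ a) (f ξ)
        * Gd BX (⇑f ∘ r) (⇑f ∘ u) (⇑f ∘ a) (⇑f ∘ w) (f η) (f ζ)
      + (f η - f ξ) * Fd BX (⇑f ∘ r) (⇑f ∘ u) (⇑f ∘ a) (f ζ)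
        * Gd BX (⇑f ∘ r) (⇑f ∘ u) (⇑f ∘ a) (⇑f ∘ w) (f ξ) (f η)
      + (f ξ - f ζ) * Fd BX (⇑f ∘ r) (⇑f ∘ u) (⇑f ∘ a) (f η)
        * Gd BX (⇑f ∘ r) (⇑f ∘ u) (⇑f ∘ a) (⇑f ∘ w) (f ζ) (f ξ) = 0 := by
    apply hginj
    rw [map_zero, map_add, map_add, _root_.map_mul, _root_.map_mul, _root_.map_mul,
      _root_.map_mul, _root_.map_mul, _root_.map_mul, map_sub, map_sub, map_sub, ← Fd_map, ← Fd_map, ← Fd_map, ← Gd_map, ← Gd_map, ← Gd_map]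
    exact fay_core (BX.map g) (⇑g ∘ (⇑f ∘ r)) (⇑g ∘ (⇑f ∘ u)) (⇑g ∘ (⇑f ∘ a))
      (⇑g ∘ (⇑f ∘ w)) (g (f ξ)) (g (f η)) (g (f ζ)) hBunit
      (hne _ _ hξη) (hne _ _ hηζ) (hne _ _ hζξ)
      (hnz _ _ hξr) (hnz _ _ hηr) (hnz _ _ hζr)
  let ev : Polynomial ℂ →+* ℂ := Polynomial.evalRingHom 0
  have final := congrArg ev key3
  rw [map_zero, map_add, map_add, _root_.map_mul, _root_.map_mul, _root_.map_mul,
    _root_.map_mul, _root_.map_mul, _root_.map_mul, map_sub, map_sub, map_sub, ← Fd_map, ← Fd_map, ← Fd_map, ← Gd_map, ← Gd_map, ← Gd_map]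
    at final
  have hBev : BX.map ev = B := by
    ext i j
    simp [hBX, charmatrix_apply, Matrix.map_apply, Matrix.diagonal_apply, apply_ite, ev]
  have hcomp : ∀ y : Fin N → ℂ, ⇑ev ∘ (⇑f ∘ y) = y := fun y =>
    funext fun k => by simp [ev, f]
  have hpt : ∀ x : ℂ, ev (f x) = x := fun x => by simp [ev, f]
  rw [hBev, hcomp r, hcomp u, hcomp a, hcomp w, hpt, hpt, hpt] at final
  exact final

lemma omega_single (A : Matrix (Fin N) (Fin N) ℂ) (l r ℓ a : Fin N → ℂ)
    (hrank : Matrix.diagonal l * A - A * Matrix.diagonal r = Matrix.vecMulVec ℓ a)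
    (s : ℂ) (hs : ∀ k, s - r k ≠ 0) :
    Omega A l r {s} * ∏ k, (s - r k) = Fd (1 + A) r ℓ a s := by
  have hentry : ∀ i j, l i * A i j - A i j * r j = ℓ i * a j := by
    intro i j
    simpa [Matrix.sub_apply, Matrix.diagonal_mul, Matrix.mul_diagonal,
      Matrix.vecMulVec_apply] using congrFun (congrFun hrank i) j
  unfold Omega Fd
  simp only [Multiset.map_singleton, Multiset.prod_singleton]
  rw [show (∏ k, (s - r k)) = (Matrix.diagonal fun k => s - r k).det from
        (Matrix.det_diagonal).symm,
    Matrix.det_one_add_mul_comm, ← Matrix.det_mul, Matrix.det_mul_comm]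
  congr 1
  rw [Matrix.mul_add, Matrix.mul_one, ← Matrix.mul_assoc, Matrix.diagonal_mul_diagonal,
    Matrix.add_mul, Matrix.one_mul]
  ext i j
  simp only [Matrix.add_apply, Matrix.sub_apply, Matrix.diagonal_mul, Matrix.mul_diagonal,
    Matrix.diagonal_apply, Matrix.vecMulVec_apply]
  have hinv : (s - r i) * ((s - l i) * (s - r i)⁻¹) = s - l i := by
    rw [mul_comm (s - l i), ← mul_assoc, mul_inv_cancel₀ (hs i), one_mul]
  by_cases hij : i = j
  · subst hij
    simp only [if_pos rfl]
    linear_combination A i i * hinv - hentry i i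
  · simp only [hij, if_false]
    linear_combination A i j * hinv - hentry i j


lemma omega_pair (A : Matrix (Fin N) (Fin N) ℂ) (l r ℓ a : Fin N → ℂ)
    (hrank : Matrix.diagonal l * A - A * Matrix.diagonal r = Matrix.vecMulVec ℓ a)
    (s t : ℂ) (hs : ∀ k, s - r k ≠ 0) (ht : ∀ k, t - r k ≠ 0) :
    Omega A l r {s, t} * ((∏ k, (s - r k)) * ∏ k, (t - r k))
      = Gd (1 + A) r ℓ a (fun k => l k * ℓ k) s t := by
  have hentry : ∀ i j, l i * A i j - A i j * r j = ℓ i * a j := by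
    intro i j
    simpa [Matrix.sub_apply, Matrix.diagonal_mul, Matrix.mul_diagonal,
      Matrix.vecMulVec_apply] using congrFun (congrFun hrank i) j
  unfold Omega Gd
  simp only [Multiset.insert_eq_cons, Multiset.map_cons, Multiset.prod_cons,
    Multiset.map_singleton, Multiset.prod_singleton]
  rw [show ((∏ k, (s - r k)) * ∏ k, (t - r k))
        = (Matrix.diagonal fun k => (s - r k) * (t - r k)).det from by
      rw [Matrix.det_diagonal, Finset.prod_mul_distrib],
    Matrix.det_one_add_mul_comm, ← Matrix.det_mul, Matrix.det_mul_comm]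
  congr 1
  rw [Matrix.mul_add, Matrix.mul_one, ← Matrix.mul_assoc, Matrix.diagonal_mul_diagonal,
    Matrix.add_mul, Matrix.one_mul]
  ext i j
  simp only [Matrix.add_apply, Matrix.sub_apply, Matrix.diagonal_mul, Matrix.mul_diagonal,
    Matrix.diagonal_apply, Matrix.vecMulVec_apply]
  have hinv2 : (s - r i) * (t - r i) * ((s - l i) * (s - r i)⁻¹ * ((t - l i) * (t - r i)⁻¹))
      = (s - l i) * (t - l i) := by
    have h1 := hs i; have h2 := ht i
    field_simp
  by_cases hij : i = j
  · subst hij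
    simp only [if_pos rfl]
    linear_combination A i i * hinv2 + (l i + r i - s - t) * hentry i i
  · simp only [hij, if_false]
    linear_combination A i j * hinv2 + (l i + r j - s - t) * hentry i j

end FayAux

theorem stmt_18 {N : ℕ} (A : Matrix (Fin N) (Fin N) ℂ) (l r ℓ a : Fin N → ℂ) (ξ η ζ : ℂ)
    (hrank : Matrix.diagonal l * A - A * Matrix.diagonal r = Matrix.vecMulVec ℓ a)
    (hξη : ξ ≠ η) (hηζ : η ≠ ζ) (hζξ : ζ ≠ ξ)
    (hξr : ∀ k, ξ - r k ≠ 0) (hηr : ∀ k, η - r k ≠ 0) (hζr : ∀ k, ζ - r k ≠ 0) :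
    (ζ - η) * Omega A l r {ξ} * Omega A l r {η, ζ}
      + (η - ξ) * Omega A l r {ζ} * Omega A l r {ξ, η}
      + (ξ - ζ) * Omega A l r {η} * Omega A l r {ζ, ξ} = 0 := by
  classical
  have hΔξ : (∏ k, (ξ - r k)) ≠ 0 := Finset.prod_ne_zero_iff.mpr fun k _ => hξr k
  have hΔη : (∏ k, (η - r k)) ≠ 0 := Finset.prod_ne_zero_iff.mpr fun k _ => hηr k
  have hΔζ : (∏ k, (ζ - r k)) ≠ 0 := Finset.prod_ne_zero_iff.mpr fun k _ => hζr k
  have hΩξ : Omega A l r {ξ} = FayAux.Fd (1 + A) r ℓ a ξ / ∏ k, (ξ - r k) :=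
    (eq_div_iff hΔξ).mpr (FayAux.omega_single A l r ℓ a hrank ξ hξr)
  have hΩη : Omega A l r {η} = FayAux.Fd (1 + A) r ℓ a η / ∏ k, (η - r k) :=
    (eq_div_iff hΔη).mpr (FayAux.omega_single A l r ℓ a hrank η hηr)
  have hΩζ : Omega A l r {ζ} = FayAux.Fd (1 + A) r ℓ a ζ / ∏ k, (ζ - r k) :=
    (eq_div_iff hΔζ).mpr (FayAux.omega_single A l r ℓ a hrank ζ hζr)
  have hΩηζ : Omega A l r {η, ζ} = FayAux.Gd (1 + A) r ℓ a (fun k => l k * ℓ k) η ζ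
      / ((∏ k, (η - r k)) * ∏ k, (ζ - r k)) :=
    (eq_div_iff (mul_ne_zero hΔη hΔζ)).mpr (FayAux.omega_pair A l r ℓ a hrank η ζ hηr hζr)
  have hΩξη : Omega A l r {ξ, η} = FayAux.Gd (1 + A) r ℓ a (fun k => l k * ℓ k) ξ η
      / ((∏ k, (ξ - r k)) * ∏ k, (η - r k)) :=
    (eq_div_iff (mul_ne_zero hΔξ hΔη)).mpr (FayAux.omega_pair A l r ℓ a hrank ξ η hξr hηr)
  have hΩζξ : Omega A l r {ζ, ξ} = FayAux.Gd (1 + A) r ℓ a (fun k => l k * ℓ k) ζ ξ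
      / ((∏ k, (ζ - r k)) * ∏ k, (ξ - r k)) :=
    (eq_div_iff (mul_ne_zero hΔζ hΔξ)).mpr (FayAux.omega_pair A l r ℓ a hrank ζ ξ hζr hξr)
  have key := FayAux.fay_generic (1 + A) r ℓ a (fun k => l k * ℓ k) ξ η ζ
    hξη hηζ hζξ hξr hηr hζr
  rw [hΩξ, hΩη, hΩζ, hΩηζ, hΩξη, hΩζξ]
  field_simp
  linear_combination key
end
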